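/- Let W ⊆ R^n be a rational linear subspace and k = lcm-circuit imbalance κ̇_W. Then for every integer vector d ∈ Z^n, every vertex of the polyhedron {x ∈ R^n : x ∈ W + d, x ≥ 0} is 1/k-integral; moreover κ̇_W is the smallest positive integer k with this property. -/

import Mathlib

open Finset

variable {ι : Type*} [Fintype ι] [DecidableEq ι]

/-- `y` conforms to `x` if `x i * y i > 0` whenever `y i ≠ 0`. -/
def Conforms (y x : ι → ℝ) : Prop := ∀ i, y i ≠ 0 → x i * y i > 0

/-- An elementary vector of `W`: a support-minimal nonzero vector of `W`. -/
def IsElementary (W : Submodule ℝ (ι → ℝ)) (g : ι → ℝ) : Prop :=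
  g ∈ W ∧ g ≠ 0 ∧
    ∀ h ∈ W, h ≠ 0 → {i | h i ≠ 0} ⊆ {i | g i ≠ 0} → {i | h i ≠ 0} = {i | g i ≠ 0}

/-- The fractional circuit imbalance measure `κ_W`. -/
noncomputable def kappa (W : Submodule ℝ (ι → ℝ)) : ℝ :=
  sSup ({1} ∪ {t : ℝ | ∃ g : ι → ℝ, IsElementary W g ∧
    ∃ i j, g i ≠ 0 ∧ g j ≠ 0 ∧ t = |g j| / |g i|})

/-- An integer elementary vector, normalized so that the gcd of its entries is 1. -/
def IsIntElementary (W : Submodule ℝ (ι → ℝ)) (g : ι → ℤ) : Prop :=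
  IsElementary W (fun i => (g i : ℝ)) ∧ Finset.univ.gcd (fun i => (g i).natAbs) = 1

/-- The max-circuit imbalance measure `κ̄_W`. -/
noncomputable def barKappa (W : Submodule ℝ (ι → ℝ)) : ℕ :=
  sSup {k : ℕ | ∃ g : ι → ℤ, IsIntElementary W g ∧
    k = Finset.univ.sup fun i => (g i).natAbs}

/-- The lcm-circuit imbalance measure `κ̇_W`: the least positive integer divisible by
every entry of every normalized integer elementary vector. -/
noncomputable def dotKappa (W : Submodule ℝ (ι → ℝ)) : ℕ :=
  sInf {k : ℕ | 0 < k ∧ ∀ g : ι → ℤ, IsIntElementary W g → ∀ i, g i ≠ 0 → (g i).natAbs ∣ k}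

/-- A rational linear subspace: one spanned by rational vectors. -/
def IsRationalSubspace (W : Submodule ℝ (ι → ℝ)) : Prop :=
  ∃ S : Set (ι → ℚ), W = Submodule.span ℝ ((fun v : ι → ℚ => fun i => ((v i : ℝ))) '' S)

/-- The orthogonal complement of `W` in `ℝ^ι` with the standard inner product. -/
def orthComp (W : Submodule ℝ (ι → ℝ)) : Submodule ℝ (ι → ℝ) where
  carrier := {v | ∀ w ∈ W, ∑ i, v i * w i = 0}
  add_mem' := by
    intro a b ha hb w hw
    have := ha w hw
    have := hb w hw
    simp only [Set.mem_setOf_eq, Pi.add_apply, add_mul, Finset.sum_add_distrib, *]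
    ring
  zero_mem' := by intro w hw; simp
  smul_mem' := by
    intro c a ha w hw
    have h := ha w hw
    simp only [Set.mem_setOf_eq, Pi.smul_apply, smul_eq_mul, mul_assoc, ← Finset.mul_sum, h,
      mul_zero]


section Aux
set_option linter.unusedSectionVars false

lemma IsElementary.smul {W : Submodule ℝ (ι → ℝ)} {g : ι → ℝ} (hg : IsElementary W g)
    {c : ℝ} (hc : c ≠ 0) : IsElementary W (c • g) := by
  obtain ⟨hmem, hne, hmin⟩ := hg
  have hsupp : {i | (c • g) i ≠ 0} = {i | g i ≠ 0} := by
    ext i; simp [Pi.smul_apply, smul_eq_mul, hc]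
  refine ⟨W.smul_mem c hmem, ?_, ?_⟩
  · intro h0
    apply hne
    funext i
    have := congrFun h0 i
    simpa [Pi.smul_apply, smul_eq_mul, hc] using this
  · intro h hh hne' hsub
    rw [hsupp] at hsub ⊢
    exact hmin h hh hne' hsub

-- P_d and extreme point characterization
lemma extreme_of_inj {n : ℕ} {W : Submodule ℝ (Fin n → ℝ)} {d : Fin n → ℤ}
    {x : Fin n → ℝ} (hxW : (x - fun i => ((d i : ℝ))) ∈ W) (hx0 : ∀ i, 0 ≤ x i)
    (hinj : ∀ w ∈ W, (∀ j, x j = 0 → w j = 0) → w = 0) :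
    x ∈ Set.extremePoints ℝ
      {x : Fin n → ℝ | (x - fun i => ((d i : ℝ))) ∈ W ∧ ∀ i, 0 ≤ x i} := by
  rw [mem_extremePoints]
  refine ⟨⟨hxW, hx0⟩, ?_⟩
  rintro y ⟨hyW, hy0⟩ z ⟨hzW, hz0⟩ hseg
  obtain ⟨a, b, ha, hb, hab, hx⟩ := hseg
  have hyz : y - z ∈ W := by
    have := W.sub_mem hyW hzW
    simpa using this
  have hvan : ∀ j, x j = 0 → (y - z) j = 0 := by
    intro j hj
    have hxj : a * y j + b * z j = 0 := by
      have h := congrFun hx j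
      simp only [Pi.add_apply, Pi.smul_apply, smul_eq_mul] at h
      rw [h, hj]
    have hyj : y j = 0 := by nlinarith [hy0 j, hz0 j]
    have hzj : z j = 0 := by nlinarith [hy0 j, hz0 j]
    simp [hyj, hzj]
  have h0 : y - z = 0 := hinj _ hyz hvan
  have hyzeq : y = z := by
    funext j; have := congrFun h0 j; simpa [sub_eq_zero] using this
  subst hyzeq
  have hxy : x = y := by
    funext j
    have := congrFun hx j
    simp only [Pi.add_apply, Pi.smul_apply, smul_eq_mul] at this
    have h2 : x j = (a + b) * y j := by rw [← this]; ring
    rw [hab, one_mul] at h2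
    exact h2
  exact ⟨hxy.symm, hxy.symm⟩

lemma inj_of_extreme {n : ℕ} {W : Submodule ℝ (Fin n → ℝ)} {d : Fin n → ℤ}
    {x : Fin n → ℝ}
    (hx : x ∈ Set.extremePoints ℝ
      {x : Fin n → ℝ | (x - fun i => ((d i : ℝ))) ∈ W ∧ ∀ i, 0 ≤ x i}) :
    ∀ w ∈ W, (∀ j, x j = 0 → w j = 0) → w = 0 := by
  rw [mem_extremePoints] at hx
  obtain ⟨⟨hxW, hx0⟩, hext⟩ := hx
  intro w hwW hvan
  by_contra hw
  have hsne : (univ.filter fun j => w j ≠ 0).Nonempty := by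
    rw [Finset.filter_nonempty_iff]
    by_contra hc
    push_neg at hc
    exact hw (funext fun j => hc j (mem_univ j))
  set s := univ.filter fun j => w j ≠ 0 with hs
  obtain ⟨j₀, hj₀s, hj₀min⟩ := Finset.exists_min_image s (fun j => x j / |w j|) hsne
  set ε := x j₀ / |w j₀| with hε
  have hwj₀ : w j₀ ≠ 0 := by simpa [hs] using hj₀s
  have hxpos : ∀ j, w j ≠ 0 → 0 < x j := by
    intro j hj
    rcases lt_or_eq_of_le (hx0 j) with h | h
    · exact h
    · exact absurd (hvan j h.symm) hj
  have hεpos : 0 < ε := div_pos (hxpos j₀ hwj₀) (abs_pos.mpr hwj₀)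
  have hbound : ∀ j, ε * |w j| ≤ x j := by
    intro j
    rcases eq_or_ne (w j) 0 with h | h
    · simp [h, hx0 j]
    · have hjs : j ∈ s := by simp [hs, h]
      have := hj₀min j hjs
      calc ε * |w j| ≤ (x j / |w j|) * |w j| := by
            apply mul_le_mul_of_nonneg_right this (abs_nonneg _)
        _ = x j := div_mul_cancel₀ _ (abs_ne_zero.mpr h)
  have hy : (fun i => x i + ε * w i) ∈ {x : Fin n → ℝ | (x - fun i => ((d i : ℝ))) ∈ W ∧ ∀ i, 0 ≤ x i} := by
    constructor
    · have : (fun i => x i + ε * w i) - (fun i => ((d i : ℝ))) =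
        (x - fun i => ((d i : ℝ))) + ε • w := by funext i; simp; ring
      rw [this]; exact W.add_mem hxW (W.smul_mem ε hwW)
    · intro i
      show 0 ≤ x i + ε * w i
      have h1 := hbound i
      have h2 : -(ε * |w i|) ≤ ε * w i := by
        have := neg_abs_le (w i)
        nlinarith
      linarith
  have hz : (fun i => x i - ε * w i) ∈ {x : Fin n → ℝ | (x - fun i => ((d i : ℝ))) ∈ W ∧ ∀ i, 0 ≤ x i} := by
    constructor
    · have : (fun i => x i - ε * w i) - (fun i => ((d i : ℝ))) =
        (x - fun i => ((d i : ℝ))) + (-ε) • w := by funext i; simp; ring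
      rw [this]; exact W.add_mem hxW (W.smul_mem _ hwW)
    · intro i
      show 0 ≤ x i - ε * w i
      have h1 := hbound i
      have h2 : ε * w i ≤ ε * |w i| := by
        have := le_abs_self (w i)
        nlinarith
      linarith
  have hseg : x ∈ openSegment ℝ (fun i => x i + ε * w i) (fun i => x i - ε * w i) := by
    refine ⟨1/2, 1/2, by norm_num, by norm_num, by norm_num, ?_⟩
    funext i; simp [Pi.smul_apply, smul_eq_mul]; ring
  have := (hext _ hy _ hz hseg).1
  have := congrFun this j₀
  have : ε * w j₀ = 0 := by linarith
  rcases mul_eq_zero.mp this with h | h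
  · exact absurd h (ne_of_gt hεpos)
  · exact hwj₀ h

-- L applied as sum over matrix entries
lemma linmap_apply_sum {n : ℕ} (L : (Fin n → ℚ) →ₗ[ℚ] (Fin n → ℚ)) (q : Fin n → ℚ) (i : Fin n) :
    L q i = ∑ j, q j * L (Pi.single j 1) i := by
  have hq : q = ∑ j, Pi.single j (q j) := (Finset.univ_sum_single q).symm
  conv_lhs => rw [hq]
  rw [map_sum, Finset.sum_apply]
  apply Finset.sum_congr rfl
  intro j _
  have hsingle : (Pi.single j (q j) : Fin n → ℚ) = q j • (Pi.single j 1 : Fin n → ℚ) := by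
    funext k
    simp [Pi.single_apply]
  rw [hsingle, map_smul]
  simp [smul_eq_mul]

/-- Key transfer lemma: if the coordinates in `T` determine elements of the rational span,
then they determine elements of the real span. -/
lemma inj_of_injQ {n : ℕ} (S : Set (Fin n → ℚ)) (T : Finset (Fin n))
    (hinjQ : ∀ v ∈ Submodule.span ℚ S, (∀ j ∈ T, v j = 0) → v = 0) :
    ∀ w ∈ Submodule.span ℝ ((fun v : Fin n → ℚ => fun i => ((v i : ℝ))) '' S),
      (∀ j ∈ T, w j = 0) → w = 0 := by
  classical
  set VQ := Submodule.span ℚ S with hVQ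
  -- the coordinate projection on T, restricted to VQ
  let f : VQ →ₗ[ℚ] ({ j // j ∈ T } → ℚ) :=
    { toFun := fun v j => (v : Fin n → ℚ) j.1
      map_add' := fun a b => rfl
      map_smul' := fun c a => rfl }
  have hker : LinearMap.ker f = ⊥ := by
    rw [LinearMap.ker_eq_bot']
    intro v hv
    have : (v : Fin n → ℚ) = 0 := by
      apply hinjQ _ v.2
      intro j hj
      exact congrFun hv ⟨j, hj⟩
    exact Subtype.ext this
  obtain ⟨ginv, hginv⟩ := LinearMap.exists_leftInverse_of_injective f hker
  -- ambient projection
  let πT : (Fin n → ℚ) →ₗ[ℚ] ({ j // j ∈ T } → ℚ) :=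
    { toFun := fun v j => v j.1
      map_add' := fun a b => rfl
      map_smul' := fun c a => rfl }
  let L : (Fin n → ℚ) →ₗ[ℚ] (Fin n → ℚ) := VQ.subtype ∘ₗ ginv ∘ₗ πT
  have hL1 : ∀ v ∈ VQ, L v = v := by
    intro v hv
    have : πT v = f ⟨v, hv⟩ := rfl
    show VQ.subtype (ginv (πT v)) = v
    rw [this]
    have := LinearMap.congr_fun hginv ⟨v, hv⟩
    simp only [LinearMap.comp_apply, LinearMap.id_apply] at this
    rw [this]
    rfl
  have hL2 : ∀ j, j ∉ T → L (Pi.single j 1) = 0 := by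
    intro j hj
    have : πT (Pi.single j 1) = 0 := by
      funext t
      exact Pi.single_eq_of_ne (fun h => hj (by rw [← h]; exact t.2)) 1
    show VQ.subtype (ginv (πT (Pi.single j 1))) = 0
    rw [this, map_zero, map_zero]
  -- real version
  set M : Fin n → Fin n → ℚ := fun i j => L (Pi.single j 1) i with hM
  set LR : (Fin n → ℝ) → (Fin n → ℝ) := fun w i => ∑ j, ((M i j : ℝ)) * w j with hLR
  have hLRrat : ∀ v : Fin n → ℚ, LR (fun i => ((v i : ℝ))) = fun i => ((L v i : ℝ)) := by
    intro v
    funext i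
    show ∑ j, ((M i j : ℝ)) * (v j : ℝ) = _
    rw [linmap_apply_sum L v i]
    push_cast
    rw [Finset.sum_congr rfl]
    intro j _
    ring
  have hfix : ∀ w ∈ Submodule.span ℝ ((fun v : Fin n → ℚ => fun i => ((v i : ℝ))) '' S), LR w = w := by
    intro w hw
    induction hw using Submodule.span_induction with
    | mem w hw =>
      obtain ⟨v, hvS, rfl⟩ := hw
      rw [hLRrat v]
      have : L v = v := hL1 v (Submodule.subset_span hvS)
      rw [this]
    | zero => funext i; simp [hLR]
    | add a b ha hb iha ihb =>
      funext i
      have : LR (a + b) i = LR a i + LR b i := by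
        simp only [hLR, Pi.add_apply, mul_add]
        rw [Finset.sum_add_distrib]
      rw [this, iha, ihb]
      rfl
    | smul c a ha iha =>
      funext i
      have : LR (c • a) i = c * LR a i := by
        simp only [hLR, Pi.smul_apply, smul_eq_mul, Finset.mul_sum]
        exact Finset.sum_congr rfl fun j _ => by ring
      rw [this, iha]
      rfl
  intro w hw hvan
  have h1 : LR w = w := hfix w hw
  have h2 : LR w = 0 := by
    funext i
    show ∑ j, ((M i j : ℝ)) * w j = 0
    apply Finset.sum_eq_zero
    intro j _
    by_cases hj : j ∈ T
    · rw [hvan j hj, mul_zero]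
    · have hMz : M i j = 0 := by show L (Pi.single j 1) i = 0; rw [hL2 j hj]; rfl
      rw [hMz]; push_cast; ring
  rw [← h1, h2]

lemma exists_int_normalized {n : ℕ} (q : Fin n → ℚ) (hq : q ≠ 0) :
    ∃ (g : Fin n → ℤ) (c : ℚ), c ≠ 0 ∧ (∀ i, (g i : ℚ) = c * q i) ∧
      Finset.univ.gcd (fun i => (g i).natAbs) = 1 := by
  classical
  obtain ⟨i₀, hi₀⟩ : ∃ i, q i ≠ 0 := by
    by_contra h; push_neg at h; exact hq (funext h)
  have hne : (Finset.univ : Finset (Fin n)).Nonempty := ⟨i₀, mem_univ _⟩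
  set N : ℕ := ∏ i, (q i).den with hN
  have hden : ∀ i, (q i).den ∣ N := fun i => Finset.dvd_prod_of_mem _ (mem_univ i)
  have hNpos : 0 < N := Finset.prod_pos (fun i _ => (q i).pos)
  set m : Fin n → ℕ := fun i => N / (q i).den with hm
  have hmN : ∀ i, ((q i).den * m i : ℕ) = N := fun i => Nat.mul_div_cancel' (hden i)
  set z : Fin n → ℤ := fun i => (q i).num * (m i : ℤ) with hz
  have hzq : ∀ i, (z i : ℚ) = N * q i := by
    intro i
    have hnum : ((q i).num : ℚ) = q i * (q i).den := by
      rw [mul_comm]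
      exact_mod_cast (Rat.den_mul_eq_num (q i)).symm
    calc (z i : ℚ) = ((q i).num : ℚ) * (m i : ℚ) := by simp only [hz]; push_cast; ring
      _ = q i * (((q i).den * m i : ℕ) : ℚ) := by rw [hnum]; push_cast; ring
      _ = N * q i := by rw [hmN i]; ring
  set G : ℕ := Finset.univ.gcd (fun i => (z i).natAbs) with hG
  have hGne : G ≠ 0 := by
    intro h0
    have := Finset.gcd_eq_zero_iff.mp (hG ▸ h0)
    have hzi : z i₀ = 0 := by
      have := this i₀ (mem_univ i₀)
      omega
    have := hzq i₀
    rw [hzi] at this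
    have : (N : ℚ) * q i₀ = 0 := by exact_mod_cast this.symm
    rcases mul_eq_zero.mp this with h | h
    · exact absurd h (by positivity)
    · exact hi₀ h
  obtain ⟨r, hr1, hr2⟩ := Finset.extract_gcd (fun i => (z i).natAbs) hne
  set g : Fin n → ℤ := fun i => (z i).sign * (r i : ℤ) with hg
  have hgz : ∀ i, g i * (G : ℤ) = z i := by
    intro i
    rcases eq_or_ne (z i) 0 with h | h
    · have : (z i).natAbs = G * r i := hr1 i (mem_univ i)
      rw [h] at this ⊢
      simp only [hg, h, Int.sign_zero, zero_mul]
    · have h1 : (z i).natAbs = G * r i := hr1 i (mem_univ i)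
      have : g i * G = (z i).sign * ((z i).natAbs : ℤ) := by
        rw [hg]
        push_cast [h1]
        ring
      rw [this, Int.sign_mul_natAbs]
  refine ⟨g, (N : ℚ) / (G : ℚ), ?_, ?_, ?_⟩
  · apply div_ne_zero
    · positivity
    · exact_mod_cast hGne
  · intro i
    have hGQ : (G : ℚ) ≠ 0 := by exact_mod_cast hGne
    have h2 : (g i : ℚ) = (z i : ℚ) / (G : ℚ) := by
      rw [eq_div_iff hGQ]
      exact_mod_cast hgz i
    rw [h2, hzq i]
    ring
  · have : ∀ i, (g i).natAbs = r i := by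
      intro i
      rcases eq_or_ne (z i) 0 with h | h
      · have h1 : (z i).natAbs = G * r i := hr1 i (mem_univ i)
        rw [h] at h1
        have : r i = 0 := by
          rcases Nat.mul_eq_zero.mp h1.symm with h' | h'
          · exact absurd h' hGne
          · exact h'
        simp [hg, h, this]
      · have h1 : (z i).natAbs = G * r i := hr1 i (mem_univ i)
        have hs : (z i).sign.natAbs = 1 := Int.natAbs_sign_of_ne_zero h
        simp [hg, Int.natAbs_mul, hs]
    rw [show (fun i => (g i).natAbs) = r from funext this]
    exact hr2

lemma intElem_pm {W : Submodule ℝ (ι → ℝ)} {g h : ι → ℤ}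
    (hg : IsIntElementary W g) (hh : IsIntElementary W h)
    (hsupp : {i | g i ≠ 0} = {i | h i ≠ 0}) : h = g ∨ h = -g := by
  classical
  obtain ⟨⟨hgW, hgne, hgmin⟩, hggcd⟩ := hg
  obtain ⟨⟨hhW, hhne, _⟩, hhgcd⟩ := hh
  obtain ⟨i₀, hi₀⟩ : ∃ i, g i ≠ 0 := by
    by_contra hc; push_neg at hc
    exact hgne (funext fun i => by simp [hc i])
  have hi₀h : h i₀ ≠ 0 := by
    have hmem : i₀ ∈ {i | h i ≠ 0} := hsupp ▸ (show i₀ ∈ {i | g i ≠ 0} from hi₀)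
    exact hmem
  -- u := h i₀ • g - g i₀ • h vanishes, comparing in ℝ
  set u : ι → ℝ := fun i => (h i₀ : ℝ) * (g i : ℝ) - (g i₀ : ℝ) * (h i : ℝ) with hu
  have huW : u ∈ W := by
    have h2 := W.sub_mem (W.smul_mem ((h i₀ : ℝ)) hgW) (W.smul_mem ((g i₀ : ℝ)) hhW)
    have heq : u = (h i₀ : ℝ) • (fun i => (g i : ℝ)) - (g i₀ : ℝ) • (fun i => (h i : ℝ)) := by
      funext i
      simp [hu, smul_eq_mul]
    rw [heq]
    exact h2
  have hu0 : u = 0 := by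
    by_contra hune
    have hsub : {i | u i ≠ 0} ⊆ {i | (fun i => (g i : ℝ)) i ≠ 0} := by
      intro i hi
      simp only [Set.mem_setOf_eq, hu] at hi ⊢
      intro hgi
      apply hi
      have hgiz : g i = 0 := by exact_mod_cast hgi
      have hhiz : h i = 0 := by
        by_contra hne
        have : i ∈ {i | h i ≠ 0} := hne
        rw [← hsupp] at this
        exact this hgiz
      simp [hgiz, hhiz]
    have heq := hgmin u huW hune hsub
    have : i₀ ∈ {i | u i ≠ 0} := by
      rw [heq]
      simpa using hi₀
    simp only [Set.mem_setOf_eq, hu] at this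
    apply this
    ring
  have hkey : ∀ i, h i₀ * g i = g i₀ * h i := by
    intro i
    have := congrFun hu0 i
    simp only [hu, Pi.zero_apply, sub_eq_zero] at this
    exact_mod_cast this
  have habs : ∀ i, (h i₀).natAbs * (g i).natAbs = (g i₀).natAbs * (h i).natAbs := by
    intro i
    have := congrArg Int.natAbs (hkey i)
    simpa [Int.natAbs_mul] using this
  have h1 : (univ.gcd fun i => (h i₀).natAbs * (g i).natAbs) = (h i₀).natAbs := by
    rw [Finset.gcd_mul_left, hggcd]
    simp
  have h2 : (univ.gcd fun i => (g i₀).natAbs * (h i).natAbs) = (g i₀).natAbs := by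
    rw [Finset.gcd_mul_left, hhgcd]
    simp
  have heqabs : (h i₀).natAbs = (g i₀).natAbs := by
    rw [← h1, ← h2]
    exact Finset.gcd_congr rfl fun i _ => habs i
  have : h i₀ = g i₀ ∨ h i₀ = -g i₀ := Int.natAbs_eq_natAbs_iff.mp heqabs
  rcases this with hcase | hcase
  · left
    funext i
    have h3 := hkey i
    rw [hcase] at h3
    exact (mul_left_cancel₀ hi₀ h3).symm
  · right
    funext i
    have := hkey i
    rw [hcase] at this
    have : g i₀ * (-(g i)) = g i₀ * h i := by rw [← this]; ring
    have := mul_left_cancel₀ hi₀ this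
    simp [← this]

lemma dvdSet_nonempty (W : Submodule ℝ (ι → ℝ)) :
    {k : ℕ | 0 < k ∧ ∀ g : ι → ℤ, IsIntElementary W g → ∀ i, g i ≠ 0 → (g i).natAbs ∣ k}.Nonempty := by
  classical
  set G : Set (ι → ℤ) := {g | IsIntElementary W g} with hGdef
  have hfiber : ∀ s : Set ι, {g ∈ G | {i | g i ≠ 0} = s}.Finite := by
    intro s
    rcases Set.eq_empty_or_nonempty {g ∈ G | {i | g i ≠ 0} = s} with h | ⟨g₀, hg₀G, hg₀s⟩
    · rw [h]; exact Set.finite_empty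
    · apply Set.Finite.subset ((Set.finite_singleton g₀).insert (-g₀))
      rintro h ⟨hhG, hhs⟩
      have := intElem_pm hg₀G hhG (by rw [hg₀s, hhs])
      rcases this with h1 | h1
      · right; exact h1
      · left; exact h1
  have hGfin : G.Finite := by
    have hsub : G ⊆ ⋃ s ∈ (Set.univ : Set (Set ι)), {g ∈ G | {i | g i ≠ 0} = s} := by
      intro g hg
      exact Set.mem_biUnion (Set.mem_univ _) ⟨hg, rfl⟩
    exact Set.Finite.subset (Set.Finite.biUnion Set.finite_univ fun s _ => hfiber s) hsub
  set k : ℕ := ∏ g ∈ hGfin.toFinset, ∏ i, max (g i).natAbs 1 with hk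
  refine ⟨k, ?_, ?_⟩
  · apply Finset.prod_pos
    intro g _
    apply Finset.prod_pos
    intro i _
    exact lt_max_of_lt_right Nat.one_pos
  · intro g hg i hgi
    have hgG : g ∈ hGfin.toFinset := by
      rw [Set.Finite.mem_toFinset]
      exact hg
    have h1 : (g i).natAbs ∣ ∏ i', max (g i').natAbs 1 := by
      have hpos : 1 ≤ (g i).natAbs := Int.natAbs_pos.mpr hgi
      have heq : (g i).natAbs = max (g i).natAbs 1 := (max_eq_left hpos).symm
      rw [heq]
      exact Finset.dvd_prod_of_mem _ (mem_univ i)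
    exact h1.trans (Finset.dvd_prod_of_mem _ hgG)

lemma natAbs_dvd_of_fractionality {n : ℕ} {W : Submodule ℝ (Fin n → ℝ)} {k : ℕ}
    (hk : 0 < k)
    (hfrac : ∀ d : Fin n → ℤ,
        ∀ x ∈ Set.extremePoints ℝ
          {x : Fin n → ℝ | (x - fun i => ((d i : ℝ))) ∈ W ∧ ∀ i, 0 ≤ x i},
        ∀ i, ∃ z : ℤ, x i = (z : ℝ) / (k : ℝ))
    {g : Fin n → ℤ} (hg : IsIntElementary W g) {i : Fin n} (hgi : g i ≠ 0) :
    (g i).natAbs ∣ k := by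
  classical
  obtain ⟨⟨hgW, hgne, hgmin⟩, hggcd⟩ := hg
  have hgiR : ((g i : ℤ) : ℝ) ≠ 0 := by exact_mod_cast hgi
  set v : Fin n → ℝ := fun j => (g j : ℝ) / (g i : ℝ) with hv
  have hvW : v ∈ W := by
    have : v = ((g i : ℝ))⁻¹ • (fun j => (g j : ℝ)) := by
      funext j; simp [hv, smul_eq_mul, div_eq_inv_mul]
    rw [this]
    exact W.smul_mem _ hgW
  set x : Fin n → ℝ := fun j => Int.fract (v j) with hx
  set d : Fin n → ℤ := fun j => -⌊v j⌋ with hd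
  have hxd : (x - fun j => ((d j : ℝ))) = v := by
    funext j
    simp only [hx, hd, Pi.sub_apply, Int.cast_neg, sub_neg_eq_add]
    rw [Int.fract]
    ring
  have hxdW : (x - fun j => ((d j : ℝ))) ∈ W := by rw [hxd]; exact hvW
  have hx0 : ∀ j, 0 ≤ x j := fun j => Int.fract_nonneg _
  have hxi : x i = 0 := by
    have : v i = 1 := by
      simp only [hv]
      exact div_self hgiR
    simp [hx, this]
  have hinj : ∀ w ∈ W, (∀ j, x j = 0 → w j = 0) → w = 0 := by
    intro w hwW hvan
    by_contra hwne
    have hsub : {j | w j ≠ 0} ⊆ {j | (fun j => ((g j : ℤ) : ℝ)) j ≠ 0} := by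
      intro j hj
      simp only [Set.mem_setOf_eq] at hj ⊢
      intro hgj
      apply hj
      apply hvan
      have : v j = 0 := by simp [hv, hgj]
      simp [hx, this]
    have heq := hgmin w hwW hwne hsub
    have hiin : i ∈ {j | ((g j : ℤ) : ℝ) ≠ 0} := hgiR
    rw [← heq] at hiin
    exact hiin (hvan i hxi)
  have hext := extreme_of_inj hxdW hx0 hinj
  have hfr := hfrac d x hext
  have hdvd : ∀ j, (g i : ℤ) ∣ (k : ℤ) * g j := by
    intro j
    obtain ⟨z, hz⟩ := hfr j
    have hkR : (k : ℝ) ≠ 0 := by positivity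
    have h1 : (k : ℝ) * v j = k * ⌊v j⌋ + z := by
      have hfr2 : Int.fract (v j) = (z : ℝ) / k := hz
      have : v j = ⌊v j⌋ + (z : ℝ) / k := by
        rw [← hfr2, Int.fract]
        ring
      conv_lhs => rw [this]
      have hzk : (k : ℝ) * ((z : ℝ) / k) = z := by field_simp
      rw [mul_add, hzk]
    have h2 : (k : ℝ) * (g j : ℝ) = ((k * ⌊v j⌋ + z : ℤ) : ℝ) * (g i : ℝ) := by
      have hvj : ((g j : ℤ) : ℝ) = v j * (g i : ℝ) := by
        rw [hv]
        field_simp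
      rw [hvj, show (k : ℝ) * (v j * ((g i : ℤ) : ℝ)) = ((k : ℝ) * v j) * (g i : ℝ) from by ring, h1]
      push_cast
      ring
    have h3 : (k : ℤ) * g j = (k * ⌊v j⌋ + z) * g i := by exact_mod_cast h2
    exact ⟨k * ⌊v j⌋ + z, by rw [h3]; ring⟩
  have habs : ∀ j, (g i).natAbs ∣ k * (g j).natAbs := by
    intro j
    have := Int.natAbs_dvd_natAbs.mpr (hdvd j)
    simpa [Int.natAbs_mul] using this
  have : (g i).natAbs ∣ univ.gcd fun j => k * (g j).natAbs :=
    Finset.dvd_gcd fun j _ => habs j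
  rw [Finset.gcd_mul_left, hggcd, mul_one] at this
  simpa using this

lemma cast_mem_span {n : ℕ} (S : Set (Fin n → ℚ)) :
    ∀ v ∈ Submodule.span ℚ S,
      (fun i => ((v i : ℝ))) ∈ Submodule.span ℝ ((fun v : Fin n → ℚ => fun i => ((v i : ℝ))) '' S) := by
  intro v hv
  induction hv using Submodule.span_induction with
  | mem v hv => exact Submodule.subset_span ⟨v, hv, rfl⟩
  | zero =>
      have : (fun i => (((0 : Fin n → ℚ) i : ℚ) : ℝ)) = (0 : Fin n → ℝ) := by
        funext i; simp
      rw [this]; exact Submodule.zero_mem _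
  | add a b ha hb iha ihb =>
      have : (fun i => (((a + b) i : ℚ) : ℝ)) = (fun i => ((a i : ℝ))) + fun i => ((b i : ℝ)) := by
        funext i; push_cast; simp
      rw [this]; exact Submodule.add_mem _ iha ihb
  | smul c a ha iha =>
      have : (fun i => (((c • a) i : ℚ) : ℝ)) = (c : ℝ) • fun i => ((a i : ℝ)) := by
        funext i; push_cast; simp
      rw [this]; exact Submodule.smul_mem _ _ iha

lemma vertex_fractionality {n : ℕ} (W : Submodule ℝ (Fin n → ℝ))
    (hrat : ∃ S : Set (Fin n → ℚ),
      W = Submodule.span ℝ ((fun v : Fin n → ℚ => fun i => ((v i : ℝ))) '' S))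
    (k : ℕ) (hkpos : 0 < k)
    (hdvd : ∀ g : Fin n → ℤ, IsIntElementary W g → ∀ i, g i ≠ 0 → (g i).natAbs ∣ k) :
    ∀ d : Fin n → ℤ,
        ∀ x ∈ Set.extremePoints ℝ
          {x : Fin n → ℝ | (x - fun i => ((d i : ℝ))) ∈ W ∧ ∀ i, 0 ≤ x i},
        ∀ i, ∃ z : ℤ, x i = (z : ℝ) / (k : ℝ) := by
  classical
  obtain ⟨S, hS⟩ := hrat
  intro d x hx i
  have hinj := inj_of_extreme hx
  have hxP := hx.1
  obtain ⟨hxW, hx0⟩ := hxP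
  set Z : Finset (Fin n) := univ.filter (fun j => x j = 0) with hZ
  set InjP : Finset (Fin n) → Prop := fun T => ∀ w ∈ W, (∀ j ∈ T, w j = 0) → w = 0 with hInjP
  have hInjZ : InjP Z := by
    intro w hw hvan
    apply hinj w hw
    intro j hxj
    exact hvan j (by simp [hZ, hxj])
  -- minimal T'
  set 𝒯 : Set (Finset (Fin n)) := {T | T ⊆ Z ∧ InjP T} with h𝒯
  have h𝒯ne : 𝒯.Nonempty := ⟨Z, Finset.Subset.refl Z, hInjZ⟩
  obtain ⟨T', hT'mem, hT'min⟩ := Set.exists_min_image 𝒯 (fun T => T.card) (Set.toFinite 𝒯) h𝒯ne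
  obtain ⟨hT'Z, hT'inj⟩ := hT'mem
  -- for each t in T', a good elementary direction
  have hgood : ∀ t ∈ T', ∃ gt : Fin n → ℝ, gt ∈ W ∧ gt t = 1 ∧
      (∀ j ∈ T'.erase t, gt j = 0) ∧ ∀ i', ∃ z : ℤ, (k : ℝ) * gt i' = z := by
    intro t ht
    -- T'.erase t is not injective
    have hnotinj : ¬ InjP (T'.erase t) := by
      intro hcon
      have hmem : T'.erase t ∈ 𝒯 := ⟨(Finset.erase_subset t T').trans hT'Z, hcon⟩
      have := hT'min _ hmem
      have hlt := Finset.card_erase_lt_of_mem ht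
      omega
    -- rational witness
    have hnotinjQ : ¬ (∀ v ∈ Submodule.span ℚ S, (∀ j ∈ T'.erase t, v j = 0) → v = 0) := by
      intro hcon
      apply hnotinj
      intro w hw hvan
      exact inj_of_injQ S (T'.erase t) hcon w (hS ▸ hw) hvan
    push_neg at hnotinjQ
    obtain ⟨v, hvQ, hvvan, hvne⟩ := hnotinjQ
    set w : Fin n → ℝ := fun i => ((v i : ℝ)) with hw
    have hwW : w ∈ W := hS ▸ cast_mem_span S v hvQ
    have hwne : w ≠ 0 := by
      intro hcon
      apply hvne
      funext j
      have := congrFun hcon j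
      simpa [hw] using this
    have hwvan : ∀ j ∈ T'.erase t, w j = 0 := by
      intro j hj
      simp [hw, hvvan j hj]
    have hwt : w t ≠ 0 := by
      intro hcon
      apply hwne
      apply hT'inj w hwW
      intro j hj
      by_cases hjt : j = t
      · rw [hjt]; exact hcon
      · exact hwvan j (Finset.mem_erase.mpr ⟨hjt, hj⟩)
    -- w is elementary
    have hwelem : IsElementary W w := by
      refine ⟨hwW, hwne, ?_⟩
      intro h hhW hhne hsub
      have hhvan : ∀ j ∈ T'.erase t, h j = 0 := by
        intro j hj
        by_contra hc
        exact (hsub hc) (hwvan j hj)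
      have hht : h t ≠ 0 := by
        intro hcon
        apply hhne
        apply hT'inj h hhW
        intro j hj
        by_cases hjt : j = t
        · rw [hjt]; exact hcon
        · exact hhvan j (Finset.mem_erase.mpr ⟨hjt, hj⟩)
      -- u = (h t) • w - (w t) • h vanishes on T'
      set u : Fin n → ℝ := fun j => h t * w j - w t * h j with hu
      have huW : u ∈ W := by
        have h2 := W.sub_mem (W.smul_mem (h t) hwW) (W.smul_mem (w t) hhW)
        have heq : u = h t • w - w t • h := by
          funext j; simp [hu, smul_eq_mul]
        rw [heq]; exact h2
      have hu0 : u = 0 := by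
        apply hT'inj u huW
        intro j hj
        by_cases hjt : j = t
        · simp [hu, hjt]; ring
        · have h1 := hwvan j (Finset.mem_erase.mpr ⟨hjt, hj⟩)
          have h2 := hhvan j (Finset.mem_erase.mpr ⟨hjt, hj⟩)
          simp [hu, h1, h2]
      have hkey : ∀ j, h t * w j = w t * h j := by
        intro j
        have := congrFun hu0 j
        simpa [hu, sub_eq_zero] using this
      ext j
      simp only [Set.mem_setOf_eq]
      constructor
      · intro hj; exact hsub hj
      · intro hj hc
        have := hkey j
        rw [hc, mul_zero] at this
        rcases mul_eq_zero.mp this with h2 | h2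
        · exact hht h2
        · exact hj h2
    -- normalize to an integer elementary vector
    obtain ⟨gz, c, hcne, hgzc, hgzgcd⟩ := exists_int_normalized v hvne
    have hvt : v t ≠ 0 := by
      intro hcon
      apply hwt
      simp [hw, hcon]
    have hgzt : gz t ≠ 0 := by
      intro hcon
      have := hgzc t
      rw [hcon] at this
      simp only [Int.cast_zero] at this
      rcases mul_eq_zero.mp this.symm with h' | h'
      · exact hcne h'
      · exact hvt h'
    have hcast : (fun i' => ((gz i' : ℝ))) = (c : ℝ) • w := by
      funext i'
      have := hgzc i'
      have : ((gz i' : ℚ) : ℝ) = ((c * v i' : ℚ) : ℝ) := by exact_mod_cast congrArg (fun a : ℚ => (a : ℝ)) this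
      push_cast at this
      simp [hw, smul_eq_mul, this]
    have hgzelem : IsIntElementary W gz := by
      constructor
      · rw [hcast]
        exact IsElementary.smul hwelem (by exact_mod_cast hcne)
      · exact hgzgcd
    obtain ⟨m, hm⟩ := hdvd gz hgzelem t hgzt
    -- gt := (w t)⁻¹ • w
    refine ⟨(w t)⁻¹ • w, W.smul_mem _ hwW, by simp [smul_eq_mul, inv_mul_cancel₀ hwt], ?_, ?_⟩
    · intro j hj
      simp [smul_eq_mul, hwvan j hj]
    · intro i'
      -- (w t)⁻¹ * w i' = gz i' / gz t
      have hgzi : ((gz i' : ℝ)) = (c : ℝ) * w i' := congrFun hcast i'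
      have hgztR : ((gz t : ℝ)) = (c : ℝ) * w t := congrFun hcast t
      have hcR : (c : ℝ) ≠ 0 := by exact_mod_cast hcne
      have hgztRne : ((gz t : ℤ) : ℝ) ≠ 0 := by exact_mod_cast hgzt
      have hratio : (w t)⁻¹ * w i' = (gz i' : ℝ) / (gz t : ℝ) := by
        rw [hgzi, hgztR]
        field_simp
      rcases le_or_gt 0 (gz t) with hsgn | hsgn
      · -- gz t = natAbs
        have habs : ((gz t).natAbs : ℤ) = gz t := Int.natAbs_of_nonneg hsgn
        refine ⟨m * gz i', ?_⟩
        have hkZ : (k : ℤ) = gz t * m := by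
          rw [← habs]; exact_mod_cast hm
        show (k : ℝ) * ((w t)⁻¹ • w) i' = ((m * gz i' : ℤ) : ℝ)
        have : ((w t)⁻¹ • w) i' = (w t)⁻¹ * w i' := rfl
        rw [this, hratio]
        have hkR : (k : ℝ) = (gz t : ℝ) * (m : ℝ) := by exact_mod_cast hkZ
        rw [hkR]
        push_cast
        field_simp
      · have habs : ((gz t).natAbs : ℤ) = -(gz t) := Int.ofNat_natAbs_of_nonpos hsgn.le
        refine ⟨-(m * gz i'), ?_⟩
        have hkZ : (k : ℤ) = -(gz t) * m := by
          rw [← habs]; exact_mod_cast hm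
        show (k : ℝ) * ((w t)⁻¹ • w) i' = ((-(m * gz i') : ℤ) : ℝ)
        have : ((w t)⁻¹ • w) i' = (w t)⁻¹ * w i' := rfl
        rw [this, hratio]
        have hkR : (k : ℝ) = -(gz t : ℝ) * (m : ℝ) := by exact_mod_cast hkZ
        rw [hkR]
        push_cast
        field_simp
  -- choose the family
  choose gt hgtW hgt1 hgt0 hgtz using hgood
  -- decomposition of v := x - d
  set vv : Fin n → ℝ := x - (fun j => ((d j : ℝ))) with hvv
  set u : Fin n → ℝ := vv - ∑ t ∈ T'.attach, (vv t.1) • gt t.1 t.2 with hu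
  have huW : u ∈ W := by
    apply W.sub_mem hxW
    apply Submodule.sum_mem
    intro t _
    exact W.smul_mem _ (hgtW t.1 t.2)
  have hu0 : u = 0 := by
    apply hT'inj u huW
    intro s hs
    have hsum : (∑ t ∈ T'.attach, (vv t.1) • gt t.1 t.2) s = vv s := by
      rw [Finset.sum_apply]
      rw [Finset.sum_eq_single_of_mem (⟨s, hs⟩ : {y // y ∈ T'}) (Finset.mem_attach _ _)]
      · simp [smul_eq_mul, hgt1 s hs]
      · intro t _ hts
        have hst : s ∈ T'.erase t.1 := by
          apply Finset.mem_erase.mpr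
          refine ⟨?_, hs⟩
          intro hcon
          apply hts
          exact Subtype.ext hcon.symm
        simp [smul_eq_mul, hgt0 t.1 t.2 s hst]
    simp [hu, hsum]
  have hvveq : ∀ i', vv i' = ∑ t ∈ T'.attach, vv t.1 * gt t.1 t.2 i' := by
    intro i'
    have := congrFun hu0 i'
    simp only [hu, Pi.sub_apply, Pi.zero_apply, sub_eq_zero] at this
    rw [this, Finset.sum_apply]
    rfl
  have hvvT : ∀ t ∈ T', vv t = -(d t : ℝ) := by
    intro t ht
    have hxt : x t = 0 := by
      have := hT'Z ht
      simp [hZ] at this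
      exact this
    simp [hvv, hxt]
  -- integer values
  choose zc hzc using fun (t : {y // y ∈ T'}) => hgtz t.1 t.2 i
  refine ⟨k * d i + ∑ t ∈ T'.attach, (-(d t.1)) * zc t, ?_⟩
  have hkR : (k : ℝ) ≠ 0 := by positivity
  rw [eq_div_iff hkR]
  have hxi : x i = (d i : ℝ) + vv i := by simp [hvv]
  rw [hxi, hvveq i]
  have hterm : ∀ t ∈ T'.attach, vv t.1 * gt t.1 t.2 i * (k : ℝ) = ((-(d t.1) * zc t : ℤ) : ℝ) := by
    intro t _
    have h1 := hvvT t.1 t.2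
    have h2 := hzc t
    rw [h1]
    push_cast
    calc -(d t.1 : ℝ) * gt t.1 t.2 i * k = -(d t.1 : ℝ) * ((k : ℝ) * gt t.1 t.2 i) := by ring
      _ = -(d t.1 : ℝ) * (zc t : ℝ) := by rw [h2]
  calc ((d i : ℝ) + ∑ t ∈ T'.attach, vv t.1 * gt t.1 t.2 i) * k
      = (d i : ℝ) * k + ∑ t ∈ T'.attach, vv t.1 * gt t.1 t.2 i * k := by
        rw [add_mul, Finset.sum_mul]
    _ = (d i : ℝ) * k + ∑ t ∈ T'.attach, ((-(d t.1) * zc t : ℤ) : ℝ) := by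
        rw [Finset.sum_congr rfl hterm]
    _ = ((k * d i + ∑ t ∈ T'.attach, (-(d t.1)) * zc t : ℤ) : ℝ) := by
        push_cast
        ring

end Aux

/-- `κ̇_W` is the smallest positive integer `k` such that, for every integer
vector `d`, every vertex (extreme point) of `{x : x ∈ W + d, x ≥ 0}` is `1/k`-integral. -/
theorem dotKappa_least_fractionality {n : ℕ} (W : Submodule ℝ (Fin n → ℝ))
    (hrat : IsRationalSubspace W) :
    IsLeast {k : ℕ | 0 < k ∧ ∀ d : Fin n → ℤ,
        ∀ x ∈ Set.extremePoints ℝ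
          {x : Fin n → ℝ | (x - fun i => ((d i : ℝ))) ∈ W ∧ ∀ i, 0 ≤ x i},
        ∀ i, ∃ z : ℤ, x i = (z : ℝ) / (k : ℝ)}
      (dotKappa W) := by
  constructor
  · have hmem := Nat.sInf_mem (dvdSet_nonempty W)
    obtain ⟨hpos, hdvd⟩ := hmem
    exact ⟨hpos, vertex_fractionality W hrat (dotKappa W) hpos hdvd⟩
  · intro k hk
    exact Nat.sInf_le ⟨hk.1, fun g hg i hgi => natAbs_dvd_of_fractionality hk.1 hk.2 hg hgi⟩
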